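/- Let H be a complex Hilbert space and let M, E : H → H be bounded linear operators such that M is self-adjoint and satisfies ⟨ψ, M ψ⟩ ≥ ε ‖ψ‖² for all ψ ∈ H and some ε > 0 (so M is invertible with bounded inverse), E is compact, and A := M + E is self-adjoint. Suppose there exist a Banach space X and an injective continuous linear map ι : H → X such that ‖ι(M⁻¹(E ψ))‖_X ≤ ‖ι ψ‖_X for all ψ ∈ H. Then A is positive semi-definite, i.e. ⟨ψ, A ψ⟩ ≥ 0 for all ψ ∈ H. -/

import Mathlib

open scoped InnerProductSpace
open Filter Topology

lemma posop_norm_sq_le {H : Type*} [NormedAddCommGroup H] [InnerProductSpace ℂ H] [CompleteSpace H]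
    (T : H →L[ℂ] H) (hT : IsSelfAdjoint T)
    (hpos : ∀ x : H, 0 ≤ (⟪x, T x⟫_ℂ).re) (x : H) :
    ‖T x‖ ^ 2 ≤ ‖T‖ * (⟪x, T x⟫_ℂ).re := by
  have hsym : ∀ u v : H, ⟪T u, v⟫_ℂ = ⟪u, T v⟫_ℂ :=
    (ContinuousLinearMap.isSelfAdjoint_iff_isSymmetric.mp hT)
  have hTT : (⟪T x, T x⟫_ℂ).re = ‖T x‖ ^ 2 := by
    rw [inner_self_eq_norm_sq_to_K]; norm_cast
  have key : ∀ t : ℝ, 0 ≤ (⟪T x, T (T x)⟫_ℂ).re * (t * t) + (2 * ‖T x‖ ^ 2) * t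
      + (⟪x, T x⟫_ℂ).re := by
    intro t
    have h0 := hpos (x + (t : ℂ) • T x)
    have hexp : ⟪x + (t:ℂ) • T x, T (x + (t:ℂ) • T x)⟫_ℂ
        = ⟪x, T x⟫_ℂ + (t:ℂ) * ⟪x, T (T x)⟫_ℂ + (t:ℂ) * ⟪T x, T x⟫_ℂ
          + ((t * t : ℝ) : ℂ) * ⟪T x, T (T x)⟫_ℂ := by
      rw [map_add, map_smul]
      simp only [inner_add_left, inner_add_right, inner_smul_left, inner_smul_right,
        Complex.conj_ofReal, Complex.ofReal_mul]
      ring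
    have hx2 : ⟪x, T (T x)⟫_ℂ = ⟪T x, T x⟫_ℂ := (hsym x (T x)).symm
    rw [hexp, hx2] at h0
    simp only [Complex.add_re, Complex.re_ofReal_mul, hTT] at h0
    have hx2' : (⟪x, T (T x)⟫_ℂ).re = ‖T x‖ ^ 2 := by rw [hx2, hTT]
    nlinarith [h0]
  have hd := discrim_le_zero (a := (⟪T x, T (T x)⟫_ℂ).re) (b := 2 * ‖T x‖ ^ 2)
    (c := (⟪x, T x⟫_ℂ).re) (fun t => by have h := key t; nlinarith [h])
  rw [discrim] at hd
  have hc : (⟪T x, T (T x)⟫_ℂ).re ≤ ‖T‖ * ‖T x‖ ^ 2 := by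
    calc (⟪T x, T (T x)⟫_ℂ).re ≤ ‖⟪T x, T (T x)⟫_ℂ‖ := Complex.re_le_norm _
      _ ≤ ‖T x‖ * ‖T (T x)‖ := norm_inner_le_norm _ _
      _ ≤ ‖T x‖ * (‖T‖ * ‖T x‖) :=
          mul_le_mul_of_nonneg_left (T.le_opNorm _) (norm_nonneg _)
      _ = ‖T‖ * ‖T x‖ ^ 2 := by ring
  by_cases hx0 : T x = 0
  · have : (0:ℝ) ≤ ‖T‖ * (⟪x, T x⟫_ℂ).re := mul_nonneg (norm_nonneg _) (hpos x)
    simpa [hx0] using this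
  · have hn : 0 < ‖T x‖ ^ 2 := by
      have : 0 < ‖T x‖ := norm_pos_iff.mpr hx0
      positivity
    nlinarith [hpos x, norm_nonneg T]

/-- abstract positivity lemma: let `H` be a complex Hilbert space,
`M, E : H →L[ℂ] H` bounded operators with `M` self-adjoint and coercive
(`⟨ψ, Mψ⟩ ≥ ε‖ψ‖²` for some `ε > 0`, so in particular `M` is boundedly invertible),
`E` compact and `A := M + E` self-adjoint.  If there is a Banach space `X` and an injective
continuous linear map `ι : H → X` such that `M⁻¹ E` is a contraction on `X`
(i.e. `‖ι χ‖_X ≤ ‖ι ψ‖_X` whenever `M χ = E ψ`), then `A` is positive semi-definite. -/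
theorem abstract_positivity
    {H : Type*} [NormedAddCommGroup H] [InnerProductSpace ℂ H] [CompleteSpace H]
    (M E : H →L[ℂ] H)
    (hM : IsSelfAdjoint M)
    (ε : ℝ) (hε : 0 < ε)
    (hcoer : ∀ ψ : H, ε * ‖ψ‖ ^ 2 ≤ (⟪ψ, M ψ⟫_ℂ).re)
    (hE : IsCompactOperator (⇑E))
    (hA : IsSelfAdjoint (M + E))
    (X : Type*) [NormedAddCommGroup X] [NormedSpace ℂ X] [CompleteSpace X]
    (ι : H →L[ℂ] X) (hι : Function.Injective ι)
    (hcontract : ∀ ψ χ : H, M χ = E ψ → ‖ι χ‖ ≤ ‖ι ψ‖) :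
    ∀ ψ : H, 0 ≤ (⟪ψ, (M + E) ψ⟫_ℂ).re := by
  by_contra hneg
  push_neg at hneg
  obtain ⟨ψ₀, hψ₀⟩ := hneg
  set a : H → ℝ := fun ψ => (⟪ψ, M ψ⟫_ℂ).re with ha
  set b : H → ℝ := fun ψ => (⟪ψ, E ψ⟫_ℂ).re with hb
  have hab : ∀ ψ : H, (⟪ψ, (M + E) ψ⟫_ℂ).re = a ψ + b ψ := by
    intro ψ
    simp [ha, hb, ContinuousLinearMap.add_apply, inner_add_right]
  have hbbound : ∀ ψ : H, |b ψ| ≤ ‖E‖ * ‖ψ‖ ^ 2 := by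
    intro ψ
    calc |b ψ| ≤ ‖⟪ψ, E ψ⟫_ℂ‖ := Complex.abs_re_le_norm _
      _ ≤ ‖ψ‖ * ‖E ψ‖ := norm_inner_le_norm _ _
      _ ≤ ‖ψ‖ * (‖E‖ * ‖ψ‖) := mul_le_mul_of_nonneg_left (E.le_opNorm _) (norm_nonneg _)
      _ = ‖E‖ * ‖ψ‖ ^ 2 := by ring
  set S : Set ℝ := {t : ℝ | t ∈ Set.Icc (0:ℝ) 1 ∧ ∀ ψ : H, 0 ≤ a ψ + t * b ψ} with hS
  have h0S : (0:ℝ) ∈ S := by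
    refine ⟨⟨le_refl 0, zero_le_one⟩, fun ψ => ?_⟩
    have := hcoer ψ
    have h2 : (0:ℝ) ≤ ε * ‖ψ‖ ^ 2 := by positivity
    simp only [zero_mul, add_zero]
    exact h2.trans this
  have hbdd : BddAbove S := ⟨1, fun t ht => ht.1.2⟩
  set t₀ : ℝ := sSup S with ht₀
  have ht₀0 : 0 ≤ t₀ := le_csSup hbdd h0S
  have ht₀1 : t₀ ≤ 1 := csSup_le ⟨0, h0S⟩ fun t ht => ht.1.2
  have ht₀S : ∀ ψ : H, 0 ≤ a ψ + t₀ * b ψ := by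
    intro ψ
    have hcl : t₀ ∈ closure S := csSup_mem_closure ⟨0, h0S⟩ hbdd
    have hclosed : IsClosed {t : ℝ | 0 ≤ a ψ + t * b ψ} :=
      isClosed_le continuous_const (by fun_prop)
    exact (hclosed.closure_subset_iff.mpr (fun t ht => ht.2 ψ)) hcl
  have ht₀lt1 : t₀ < 1 := by
    rcases lt_or_eq_of_le ht₀1 with h | h
    · exact h
    · exfalso
      have := ht₀S ψ₀
      rw [h, one_mul] at this
      rw [hab ψ₀] at hψ₀
      linarith
  set T : H →L[ℂ] H := M + (t₀ : ℂ) • E with hT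
  have hgT : ∀ ψ : H, (⟪ψ, T ψ⟫_ℂ).re = a ψ + t₀ * b ψ := by
    intro ψ
    simp only [hT, ContinuousLinearMap.add_apply, ContinuousLinearMap.coe_smul',
      Pi.smul_apply, inner_add_right, inner_smul_right, Complex.add_re,
      Complex.re_ofReal_mul, ha, hb]
  have hEsa : IsSelfAdjoint E := by
    have h := hA.sub hM
    rwa [add_sub_cancel_left] at h
  have hTsa : IsSelfAdjoint T := by
    rw [IsSelfAdjoint, hT, star_add, star_smul, hM.star_eq, hEsa.star_eq,
      RCLike.star_def, Complex.conj_ofReal]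
  have hTpos : ∀ ψ : H, 0 ≤ (⟪ψ, T ψ⟫_ℂ).re := fun ψ => (hgT ψ) ▸ ht₀S ψ
  -- almost-minimizers
  have hmin : ∀ δ : ℝ, 0 < δ → ∃ ψ : H, ‖ψ‖ = 1 ∧ (⟪ψ, T ψ⟫_ℂ).re < δ := by
    intro δ hδ
    by_contra hcon
    push_neg at hcon
    have hquad : ∀ ψ : H, δ * ‖ψ‖ ^ 2 ≤ a ψ + t₀ * b ψ := by
      intro ψ
      by_cases hψ : ψ = 0
      · simp [hψ, ha, hb]
      · have hnψ : 0 < ‖ψ‖ := norm_pos_iff.mpr hψ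
        set u : H := ((‖ψ‖ : ℂ))⁻¹ • ψ with hu
        have hnu : ‖u‖ = 1 := by
          rw [hu, norm_smul]
          simp [norm_inv, hnψ.ne']
        have hTu : (⟪u, T u⟫_ℂ).re = (‖ψ‖^2)⁻¹ * (⟪ψ, T ψ⟫_ℂ).re := by
          rw [hu]
          rw [map_smul]
          simp only [inner_smul_left, inner_smul_right, map_inv₀, Complex.conj_ofReal]
          rw [← mul_assoc, ← Complex.ofReal_inv, ← Complex.ofReal_mul]
          rw [Complex.re_ofReal_mul]
          congr 1
          rw [← mul_inv]
          norm_num [sq]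
        have h1 := hcon u hnu
        rw [hTu] at h1
        have h2 : ‖ψ‖ ^ 2 * δ ≤ (⟪ψ, T ψ⟫_ℂ).re := by
          rwa [le_inv_mul_iff₀ (by positivity)] at h1
        rw [← hgT ψ]
        nlinarith [h2]
    -- push beyond t₀
    set t' : ℝ := min 1 (t₀ + δ / (‖E‖ + 1)) with ht'
    have hEpos : (0:ℝ) < ‖E‖ + 1 := by positivity
    have ht'S : t' ∈ S := by
      constructor
      · constructor
        · apply le_min zero_le_one
          positivity
        · exact min_le_left _ _
      · intro ψ
        have hd1 : 0 ≤ t' - t₀ := by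
          rw [ht']
          rcases le_or_gt 1 (t₀ + δ / (‖E‖ + 1)) with hx | hx
          · rw [min_eq_left hx]; linarith
          · rw [min_eq_right hx.le]
            have : 0 < δ / (‖E‖ + 1) := by positivity
            linarith
        have hd2 : t' - t₀ ≤ δ / (‖E‖ + 1) := by
          have : t' ≤ t₀ + δ / (‖E‖ + 1) := min_le_right _ _
          linarith
        have hq := hquad ψ
        have hbb := hbbound ψ
        have habs : |(t' - t₀) * b ψ| ≤ (δ / (‖E‖ + 1)) * (‖E‖ * ‖ψ‖ ^ 2) := by
          rw [abs_mul]
          apply mul_le_mul (by rwa [abs_of_nonneg hd1]) hbb (abs_nonneg _) (by positivity)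
        have hfrac : (δ / (‖E‖ + 1)) * ‖E‖ ≤ δ := by
          rw [div_mul_eq_mul_div, div_le_iff₀ hEpos]
          nlinarith [norm_nonneg E]
        have : a ψ + t' * b ψ = (a ψ + t₀ * b ψ) + (t' - t₀) * b ψ := by ring
        rw [this]
        have := neg_abs_le ((t' - t₀) * b ψ)
        nlinarith [habs, hfrac, sq_nonneg ‖ψ‖]
    have ht'gt : t₀ < t' := by
      apply lt_min ht₀lt1
      have : 0 < δ / (‖E‖ + 1) := by positivity
      linarith
    exact absurd (le_csSup hbdd ht'S) (not_le.mpr ht'gt)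
  -- choose sequence
  have hseq : ∀ n : ℕ, ∃ ψ : H, ‖ψ‖ = 1 ∧ (⟪ψ, T ψ⟫_ℂ).re < 1 / (n + 1) := by
    intro n
    exact hmin (1 / (n + 1)) (by positivity)
  choose u hu1 hu2 using hseq
  -- T (u n) → 0
  have hTto0 : Tendsto (fun n => T (u n)) atTop (𝓝 0) := by
    rw [tendsto_zero_iff_norm_tendsto_zero]
    have hsq : ∀ n : ℕ, ‖T (u n)‖ ^ 2 ≤ ‖T‖ * (1 / (n + 1)) := by
      intro n
      calc ‖T (u n)‖ ^ 2 ≤ ‖T‖ * (⟪u n, T (u n)⟫_ℂ).re := posop_norm_sq_le T hTsa hTpos _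
        _ ≤ ‖T‖ * (1 / (n + 1)) :=
          mul_le_mul_of_nonneg_left (hu2 n).le (norm_nonneg _)
    have hlim : Tendsto (fun n : ℕ => ‖T‖ * (1 / (n + 1 : ℝ))) atTop (𝓝 0) := by
      have := tendsto_one_div_add_atTop_nhds_zero_nat (𝕜 := ℝ)
      simpa using this.const_mul ‖T‖
    have hsq0 : Tendsto (fun n => ‖T (u n)‖ ^ 2) atTop (𝓝 0) := by
      apply tendsto_of_tendsto_of_tendsto_of_le_of_le tendsto_const_nhds hlim
      · intro n; positivity
      · intro n; exact hsq n
    have := hsq0.sqrt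
    simpa [Real.sqrt_sq (norm_nonneg _)] using this
  -- compactness: extract convergent subsequence of E (u n)
  obtain ⟨K, hK, hKsub⟩ := hE.image_closedBall_subset_compact (𝕜₁ := ℂ)
    (f := (E : H →ₗ[ℂ] H)) 1
  have hmem : ∀ n : ℕ, E (u n) ∈ K := by
    intro n
    apply hKsub
    exact ⟨u n, by simp [Metric.mem_closedBall, (hu1 n).le], rfl⟩
  obtain ⟨y, -, φ, hφmono, hφlim⟩ := hK.tendsto_subseq hmem
  -- M is surjective
  have hMlow : ∀ x : H, ε * ‖x‖ ≤ ‖M x‖ := by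
    intro x
    by_cases hx : x = 0
    · simp [hx]
    · have hnx : 0 < ‖x‖ := norm_pos_iff.mpr hx
      have h1 : ε * ‖x‖ ^ 2 ≤ ‖x‖ * ‖M x‖ := by
        calc ε * ‖x‖ ^ 2 ≤ (⟪x, M x⟫_ℂ).re := hcoer x
          _ ≤ ‖⟪x, M x⟫_ℂ‖ := Complex.re_le_norm _
          _ ≤ ‖x‖ * ‖M x‖ := norm_inner_le_norm _ _
      nlinarith
  have hMsurj : Function.Surjective M := by
    have hunit : IsUnit M := by
      refine ContinuousLinearMap.isUnit_of_forall_le_norm_inner_map M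
        (c := ⟨ε, hε.le⟩) (by exact_mod_cast hε) ?_
      intro x
      have h1 : ε * ‖x‖ ^ 2 ≤ (⟪x, M x⟫_ℂ).re := hcoer x
      have h2 : (⟪x, M x⟫_ℂ).re ≤ ‖⟪x, M x⟫_ℂ‖ := Complex.re_le_norm _
      have h3 : ‖⟪M x, x⟫_ℂ‖ = ‖⟪x, M x⟫_ℂ‖ := norm_inner_symm _ _
      push_cast
      change ‖x‖ ^ 2 * ε ≤ _
      rw [h3]
      nlinarith
    exact (ContinuousLinearMap.isUnit_iff_bijective.mp hunit).2
  -- limit of M (u (φ n))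
  have hMto : Tendsto (fun n => M (u (φ n))) atTop (𝓝 (-(t₀ : ℂ) • y)) := by
    have hMeq : ∀ n : ℕ, M (u (φ n)) = T (u (φ n)) - (t₀ : ℂ) • E (u (φ n)) := by
      intro n
      simp [hT, ContinuousLinearMap.add_apply]
    simp_rw [hMeq]
    have h1 : Tendsto (fun n => T (u (φ n))) atTop (𝓝 0) :=
      hTto0.comp hφmono.tendsto_atTop
    have h2 : Tendsto (fun n => (t₀ : ℂ) • E (u (φ n))) atTop (𝓝 ((t₀ : ℂ) • y)) := by
      exact (hφlim.const_smul ((t₀ : ℂ)))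
    have := h1.sub h2
    simpa using this
  obtain ⟨χ, hχ⟩ := hMsurj (-(t₀ : ℂ) • y)
  -- u (φ n) → χ
  have huto : Tendsto (fun n => u (φ n)) atTop (𝓝 χ) := by
    rw [tendsto_iff_norm_sub_tendsto_zero]
    have hb : ∀ n : ℕ, ‖u (φ n) - χ‖ ≤ ε⁻¹ * ‖M (u (φ n)) - M χ‖ := by
      intro n
      have h := hMlow (u (φ n) - χ)
      rw [map_sub] at h
      exact (le_inv_mul_iff₀ hε).mpr h
    have hlim0 : Tendsto (fun n => ε⁻¹ * ‖M (u (φ n)) - M χ‖) atTop (𝓝 0) := by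
      have : Tendsto (fun n => M (u (φ n)) - M χ) atTop (𝓝 0) := by
        rw [hχ]
        simpa using hMto.sub_const (-(t₀ : ℂ) • y)
      have hn := this.norm
      simpa using hn.const_mul ε⁻¹
    apply tendsto_of_tendsto_of_tendsto_of_le_of_le tendsto_const_nhds hlim0
    · intro n; positivity
    · exact hb
  have hχnorm : ‖χ‖ = 1 := by
    have := huto.norm
    simp_rw [hu1] at this
    exact tendsto_nhds_unique tendsto_const_nhds this |>.symm
  have hEχ : E χ = y := by
    have h1 : Tendsto (fun n => E (u (φ n))) atTop (𝓝 (E χ)) :=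
      (E.continuous.tendsto χ).comp huto
    exact tendsto_nhds_unique h1 hφlim
  -- final contradiction via the contraction property
  have hMχ : M χ = E ((-(t₀ : ℂ)) • χ) := by
    rw [map_smul, hχ, hEχ]
  have hcontr := hcontract ((-(t₀ : ℂ)) • χ) χ hMχ
  rw [map_smul, norm_smul] at hcontr
  have hnormc : ‖(-(t₀ : ℂ))‖ = t₀ := by
    simp [abs_of_nonneg ht₀0]
  rw [hnormc] at hcontr
  have hι0 : ‖ι χ‖ = 0 := by
    by_contra hne
    have hpos : 0 < ‖ι χ‖ := lt_of_le_of_ne (norm_nonneg _) (Ne.symm hne)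
    have h2 : t₀ * ‖ι χ‖ < 1 * ‖ι χ‖ := mul_lt_mul_of_pos_right ht₀lt1 hpos
    rw [one_mul] at h2
    linarith
  have hχ0 : χ = 0 := by
    apply hι
    rw [map_zero]
    exact norm_eq_zero.mp hι0
  rw [hχ0, norm_zero] at hχnorm
  norm_num at hχnorm
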